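/- A quadratic map φ: ℝ^m → ℝ^n given by φ(X) = (XᵀA₁X, …, XᵀAₙX) with symmetric matrices Aᵢ is horizontally weakly conformal (i.e. ⟨∇φⁱ(X), ∇φʲ(X)⟩ = λ²(X)δⁱʲ for some function λ²) if and only if AᵢAⱼ + AⱼAᵢ = 0 for all i ≠ j and Aᵢ² = Aⱼ² for all i, j. -/

import Mathlib

open Matrix

lemma hasFDerivAt_quad (m : ℕ) (M : Matrix (Fin m) (Fin m) ℝ) (X : Fin m → ℝ) :
    HasFDerivAt (fun (Z : Fin m → ℝ) => Z ⬝ᵥ M.mulVec Z)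
      (∑ a, ∑ b, M a b • (X a • (ContinuousLinearMap.proj b : (Fin m → ℝ) →L[ℝ] ℝ)
        + X b • (ContinuousLinearMap.proj a : (Fin m → ℝ) →L[ℝ] ℝ))) X := by
  have h : (fun (Z : Fin m → ℝ) => Z ⬝ᵥ M.mulVec Z)
      = fun Z => ∑ a, ∑ b, M a b * (Z a * Z b) := by
    funext Z
    simp only [dotProduct, Matrix.mulVec, Finset.mul_sum]
    congr 1; funext a; congr 1; funext b; ring
  rw [h]
  apply HasFDerivAt.fun_sum; intro a _
  apply HasFDerivAt.fun_sum; intro b _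
  exact ((hasFDerivAt_apply a X).mul (hasFDerivAt_apply b X)).const_mul (M a b)

lemma fderiv_quad_single (m : ℕ) (M : Matrix (Fin m) (Fin m) ℝ) (hM : M.IsSymm)
    (X : Fin m → ℝ) (k : Fin m) :
    fderiv ℝ (fun (Z : Fin m → ℝ) => Z ⬝ᵥ M.mulVec Z) X (Pi.single k 1)
      = 2 * (M.mulVec X) k := by
  rw [(hasFDerivAt_quad m M X).fderiv]
  have e1 : ∀ u : Fin m,
      (ContinuousLinearMap.proj u : (Fin m → ℝ) →L[ℝ] ℝ) (Pi.single k 1)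
        = if u = k then 1 else 0 := by
    intro u; simp [Pi.single_apply]
  simp only [ContinuousLinearMap.sum_apply, ContinuousLinearMap.smul_apply,
    ContinuousLinearMap.add_apply, e1, smul_eq_mul, mul_ite, mul_one, mul_zero, mul_add]
  simp only [Finset.sum_add_distrib, Finset.sum_ite_eq', Finset.mem_univ, if_true,
    Finset.sum_ite_eq, Finset.sum_ite_irrel, Finset.sum_const_zero]
  have hsym : ∀ x, M x k = M k x := by
    intro x; conv_lhs => rw [← hM]
    rfl
  simp only [hsym]
  simp [Matrix.mulVec, dotProduct, mul_comm, two_mul]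

lemma quadform_zero (m : ℕ) (M : Matrix (Fin m) (Fin m) ℝ) (hM : M.IsSymm)
    (h : ∀ X : Fin m → ℝ, X ⬝ᵥ M.mulVec X = 0) : M = 0 := by
  ext a b
  have key : ∀ u v : Fin m, (Pi.single u 1 : Fin m → ℝ) ⬝ᵥ M.mulVec (Pi.single v 1) = M u v := by
    intro u v
    simp [Matrix.mulVec, dotProduct, Pi.single_apply]
  have hd : ∀ u, M u u = 0 := by
    intro u
    have := h (Pi.single u 1)
    rwa [key u u] at this
  have hs := h (Pi.single a 1 + Pi.single b 1)
  rw [Matrix.mulVec_add, add_dotProduct, dotProduct_add, dotProduct_add,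
    key, key, key, key, hd, hd] at hs
  have hba : M b a = M a b := by
    calc M b a = Mᵀ a b := rfl
    _ = M a b := by rw [hM]
  simp only [Matrix.zero_apply]
  linarith

lemma quad_transpose (m : ℕ) (B : Matrix (Fin m) (Fin m) ℝ) (X : Fin m → ℝ) :
    X ⬝ᵥ Bᵀ.mulVec X = X ⬝ᵥ B.mulVec X := by
  rw [Matrix.dotProduct_mulVec, Matrix.vecMul_transpose, dotProduct_comm]

theorem quadratic_map_horizConformal_iff (m n : ℕ)
    (A : Fin n → Matrix (Fin m) (Fin m) ℝ) (hA : ∀ i, (A i).IsSymm) :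
    (∃ lam : (Fin m → ℝ) → ℝ, ∀ (X : Fin m → ℝ) (i j : Fin n),
      ∑ k : Fin m,
          fderiv ℝ (fun (Z : Fin m → ℝ) => Z ⬝ᵥ (A i).mulVec Z) X (Pi.single k 1) *
          fderiv ℝ (fun (Z : Fin m → ℝ) => Z ⬝ᵥ (A j).mulVec Z) X (Pi.single k 1)
        = lam X * (if i = j then 1 else 0))
    ↔ ((∀ i j, i ≠ j → A i * A j + A j * A i = 0) ∧ (∀ i j, (A i) ^ 2 = (A j) ^ 2)) := by
  have key : ∀ (X : Fin m → ℝ) (i j : Fin n),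
      ∑ k : Fin m,
          fderiv ℝ (fun (Z : Fin m → ℝ) => Z ⬝ᵥ (A i).mulVec Z) X (Pi.single k 1) *
          fderiv ℝ (fun (Z : Fin m → ℝ) => Z ⬝ᵥ (A j).mulVec Z) X (Pi.single k 1)
        = 4 * (X ⬝ᵥ (A i * A j).mulVec X) := by
    intro X i j
    simp only [fderiv_quad_single m (A i) (hA i), fderiv_quad_single m (A j) (hA j)]
    have h1 : X ⬝ᵥ (A i * A j).mulVec X = (A i).mulVec X ⬝ᵥ (A j).mulVec X := by
      rw [← Matrix.mulVec_mulVec, Matrix.dotProduct_mulVec]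
      congr 1
      rw [← Matrix.mulVec_transpose, hA i]
    rw [h1]
    simp only [dotProduct, Finset.mul_sum]
    congr 1; funext k; ring
  constructor
  · rintro ⟨lam, hlam⟩
    have hq : ∀ (X : Fin m → ℝ) (i j : Fin n),
        4 * (X ⬝ᵥ (A i * A j).mulVec X) = lam X * (if i = j then 1 else 0) := by
      intro X i j; rw [← key]; exact hlam X i j
    constructor
    · intro i j hij
      apply quadform_zero m _ _
      · intro X
        have h1 := hq X i j
        have h2 := hq X j i
        rw [if_neg hij, mul_zero] at h1
        rw [if_neg (Ne.symm hij), mul_zero] at h2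
        rw [Matrix.add_mulVec, dotProduct_add]
        nlinarith [h1, h2]
      · unfold Matrix.IsSymm
        rw [Matrix.transpose_add, Matrix.transpose_mul, Matrix.transpose_mul, hA i, hA j,
          add_comm]
    · intro i j
      have hzero : A i ^ 2 - A j ^ 2 = 0 := by
        apply quadform_zero m _ _
        · intro X
          have h1 := hq X i i
          have h2 := hq X j j
          simp only [if_pos rfl, mul_one] at h1 h2
          rw [Matrix.sub_mulVec, dotProduct_sub, sq, sq]
          nlinarith [h1, h2]
        · unfold Matrix.IsSymm
          rw [Matrix.transpose_sub, sq, sq, Matrix.transpose_mul, Matrix.transpose_mul,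
            hA i, hA j]
      exact sub_eq_zero.mp hzero
  · rintro ⟨hanti, hsq⟩
    rcases Nat.eq_zero_or_pos n with hn | hn
    · subst hn
      exact ⟨fun _ => 0, fun X i j => Fin.elim0 i⟩
    · refine ⟨fun X => 4 * (X ⬝ᵥ ((A ⟨0, hn⟩) ^ 2).mulVec X), fun X i j => ?_⟩
      rw [key]
      by_cases hij : i = j
      · subst hij
        rw [if_pos rfl, mul_one, ← sq, hsq i ⟨0, hn⟩]
      · rw [if_neg hij, mul_zero]
        have h0 : A i * A j = -(A j * A i) := by
          exact eq_neg_of_add_eq_zero_left (hanti i j hij)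
        have ht : (A i * A j)ᵀ = A j * A i := by
          rw [Matrix.transpose_mul, hA i, hA j]
        have : X ⬝ᵥ (A i * A j).mulVec X = X ⬝ᵥ (A j * A i).mulVec X := by
          rw [← ht, quad_transpose]
        rw [h0] at this
        simp only [Matrix.neg_mulVec, dotProduct_neg] at this
        have : X ⬝ᵥ (A i * A j).mulVec X = 0 := by
          rw [h0] at *
          simp only [Matrix.neg_mulVec, dotProduct_neg]
          linarith
        rw [this, mul_zero]
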